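/- Let f ∈ ℤ_p[x_1,…,x_n] be a nonzero polynomial with f(0) = 0 and let τ be a proper face of the Newton polyhedron Γ_f. Let γ_1,…,γ_e be all the facets of Γ_f containing τ, and let a_1,…,a_e ∈ ℕ^n \ {0} be the unique primitive vectors with F_f(a_i) = γ_i. Then: (1) Δ_τ := {a ∈ ℝ_{≥0}^n \ {0} : F_f(a) = τ} = {λ_1 a_1 + … + λ_e a_e : λ_i ∈ ℝ, λ_i > 0}; (2) the topological closure of Δ_τ equals {a ∈ ℝ_{≥0}^n : τ ⊆ F_f(a)} = {λ_1 a_1 + … + λ_e a_e : λ_i ∈ ℝ, λ_i ≥ 0}; (3) the dimension of the linear span of Δ_τ in ℝ^n equals n − dim τ, where dim τ is the dimension of the affine span of τ. -/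

import Mathlib

open MeasureTheory MvPolynomial

namespace IgusaTS

variable (p : ℕ) [Fact p.Prime]

/-- The Newton polyhedron `Γ_f`: convex hull of `⋃_{ω ∈ supp f} (ω + ℝ_{≥0}^n)`. -/
def NewtonPolyhedron {n : ℕ} (f : MvPolynomial (Fin n) ℤ_[p]) : Set (Fin n → ℝ) :=
  convexHull ℝ (⋃ ω ∈ f.support, {x : Fin n → ℝ | ∀ i, (ω i : ℝ) ≤ x i})

/-- `m_f(a) = inf_{x ∈ Γ_f} a·x`. -/
noncomputable def mReal {n : ℕ} (f : MvPolynomial (Fin n) ℤ_[p]) (a : Fin n → ℝ) : ℝ :=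
  sInf ((fun x => ∑ i, a i * x i) '' NewtonPolyhedron p f)

/-- For `a ∈ ℕ^n`, `m_f(a)` as a natural number: the minimum of `a·ω` over
`ω ∈ supp f`, which equals `inf_{x ∈ Γ_f} a·x` since `a ≥ 0`. -/
noncomputable def mNat {n : ℕ} (f : MvPolynomial (Fin n) ℤ_[p]) (a : Fin n → ℕ) : ℕ :=
  sInf {k | ∃ ω ∈ f.support, k = ∑ i, a i * ω i}

/-- The first meet locus `F_f(a) = {x ∈ Γ_f : a·x = m_f(a)}`. -/
def FML {n : ℕ} (f : MvPolynomial (Fin n) ℤ_[p]) (a : Fin n → ℝ) : Set (Fin n → ℝ) :=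
  {x ∈ NewtonPolyhedron p f | ∑ i, a i * x i = mReal p f a}

/-- A proper face of `Γ_f` is a first meet locus `F_f(a)` with `a ∈ ℝ_{≥0}^n \ {0}`. -/
def IsProperFace {n : ℕ} (f : MvPolynomial (Fin n) ℤ_[p]) (τ : Set (Fin n → ℝ)) : Prop :=
  ∃ a : Fin n → ℝ, (∀ i, 0 ≤ a i) ∧ a ≠ 0 ∧ τ = FML p f a

/-- A face of `Γ_f` is `Γ_f` itself or a proper face. -/
def IsFace {n : ℕ} (f : MvPolynomial (Fin n) ℤ_[p]) (τ : Set (Fin n → ℝ)) : Prop :=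
  τ = NewtonPolyhedron p f ∨ IsProperFace p f τ

/-- A facet is a face whose affine span has dimension `n - 1`. -/
def IsFacet {n : ℕ} (f : MvPolynomial (Fin n) ℤ_[p]) (τ : Set (Fin n → ℝ)) : Prop :=
  IsFace p f τ ∧ Module.finrank ℝ (affineSpan ℝ τ).direction = n - 1

/-- `a ∈ ℕ^n` is primitive if the gcd of its components is `1`. -/
def Primitive {n : ℕ} (a : Fin n → ℕ) : Prop := Finset.univ.gcd a = 1

/-- The coercion of `a : ℕ^n` into `ℝ^n`. -/
def natVec {n : ℕ} (a : Fin n → ℕ) : Fin n → ℝ := fun i => (a i : ℝ)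

open scoped Classical in
/-- The face polynomial `f_τ`: the sum of the terms `c_ω x^ω` of `f` with `ω ∈ τ`. -/
noncomputable def facePoly {n : ℕ} (f : MvPolynomial (Fin n) ℤ_[p]) (τ : Set (Fin n → ℝ)) :
    MvPolynomial (Fin n) ℤ_[p] :=
  ∑ ω ∈ f.support, if (fun i => (ω i : ℝ)) ∈ τ then monomial ω (coeff ω f) else 0

/-- `f` is Newton non-critical: for every face `τ` of `Γ_f`, the system
`∂f_τ/∂xᵢ = 0` (`1 ≤ i ≤ n`) has no solution in `(ℚ_p \ {0})^n`. -/
def NewtonNonCritical {n : ℕ} (f : MvPolynomial (Fin n) ℤ_[p]) : Prop :=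
  ∀ τ : Set (Fin n → ℝ), IsFace p f τ →
    ¬ ∃ x : Fin n → ℚ_[p], (∀ i, x i ≠ 0) ∧
        ∀ i, MvPolynomial.aeval x (MvPolynomial.pderiv i (facePoly p f τ)) = 0

/-- The real number `p^{c_{a,b}(s)}`: equal to `p^{-ls - e|b| - e'|a|}` when
`m_f(a) > 0` and `m_g(b) > 0` (where `l = lcm(m_f(a),m_g(b))`,
`e = m_f(a)/gcd(m_f(a),m_g(b))`, `e' = m_g(b)/gcd(m_f(a),m_g(b))`),
and to `0` if `m_f(a) = 0` or `m_g(b) = 0`. -/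
noncomputable def pcab {n m : ℕ} (f : MvPolynomial (Fin n) ℤ_[p])
    (g : MvPolynomial (Fin m) ℤ_[p]) (a : Fin n → ℕ) (b : Fin m → ℕ) (s : ℝ) : ℝ :=
  if mNat p f a = 0 ∨ mNat p g b = 0 then 0
  else (p : ℝ) ^ (-(Nat.lcm (mNat p f a) (mNat p g b) : ℝ) * s
    - ((mNat p f a / Nat.gcd (mNat p f a) (mNat p g b) : ℕ) : ℝ) * (∑ j, (b j : ℝ))
    - ((mNat p g b / Nat.gcd (mNat p f a) (mNat p g b) : ℕ) : ℝ) * (∑ i, (a i : ℝ)))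

open Module

/-- The linear functional `d ↦ ∑ i, x i * d i`. -/
def dotL {n : ℕ} (x : Fin n → ℝ) : (Fin n → ℝ) →ₗ[ℝ] ℝ where
  toFun d := ∑ i, x i * d i
  map_add' a b := by simp [mul_add, Finset.sum_add_distrib]
  map_smul' c a := by simp [Finset.mul_sum]; ring_nf; simp [mul_comm, mul_left_comm]

lemma dotL_apply {n : ℕ} (x d : Fin n → ℝ) : dotL x d = ∑ i, x i * d i := rfl

lemma dotL_comm {n : ℕ} (x d : Fin n → ℝ) : dotL x d = dotL d x := by
  simp [dotL_apply, mul_comm]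

lemma dotL_add_left {n : ℕ} (x y d : Fin n → ℝ) :
    dotL (x + y) d = dotL x d + dotL y d := by
  simp [dotL_apply, add_mul, Finset.sum_add_distrib]

lemma dotL_smul_left {n : ℕ} (c : ℝ) (x d : Fin n → ℝ) :
    dotL (c • x) d = c * dotL x d := by
  simp [dotL_apply, Finset.mul_sum, mul_assoc]

lemma dotL_single {n : ℕ} (x : Fin n → ℝ) (i : Fin n) :
    dotL x (Pi.single i 1) = x i := by
  simp [dotL_apply, Pi.single_apply, mul_ite]

/-- The "orthogonal complement" of a submodule w.r.t. the dot pairing. -/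
def dualComp {n : ℕ} (D : Submodule ℝ (Fin n → ℝ)) : Submodule ℝ (Fin n → ℝ) where
  carrier := {c | ∀ d ∈ D, dotL c d = 0}
  add_mem' := by intro a b ha hb d hd; rw [dotL_add_left]; rw [ha d hd, hb d hd]; ring
  zero_mem' := by intro d hd; simp [dotL_apply]
  smul_mem' := by intro c a ha d hd; rw [dotL_smul_left, ha d hd]; ring

lemma mem_dualComp {n : ℕ} {D : Submodule ℝ (Fin n → ℝ)} {c : Fin n → ℝ} :
    c ∈ dualComp D ↔ ∀ d ∈ D, dotL c d = 0 := Iff.rfl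

lemma finrank_dualComp {n : ℕ} (D : Submodule ℝ (Fin n → ℝ)) :
    finrank ℝ (dualComp D) = n - finrank ℝ D := by
  classical
  set L : EuclideanSpace ℝ (Fin n) ≃ₗ[ℝ] (Fin n → ℝ) := WithLp.linearEquiv 2 ℝ (Fin n → ℝ)
  set D' : Submodule ℝ (EuclideanSpace ℝ (Fin n)) := D.map (L.symm : (Fin n → ℝ) →ₗ[ℝ] _)
  have hinner : ∀ x y : EuclideanSpace ℝ (Fin n), (inner ℝ x y : ℝ) = ∑ i, x i * y i := by
    intro x y
    rw [PiLp.inner_apply]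
    simp [RCLike.inner_apply, mul_comm]
  have hmem : ∀ c : Fin n → ℝ, c ∈ dualComp D ↔ L.symm c ∈ D'ᗮ := by
    intro c
    constructor
    · intro hc z hz
      obtain ⟨d, hd, rfl⟩ := hz
      rw [real_inner_comm, hinner]
      have := hc d hd
      rw [dotL_apply] at this
      exact this
    · intro hc d hd
      have := hc (L.symm d) ⟨d, hd, rfl⟩
      rw [real_inner_comm, hinner] at this
      rw [dotL_apply]
      exact this
  have hDC : dualComp D = D'ᗮ.map (L : EuclideanSpace ℝ (Fin n) →ₗ[ℝ] (Fin n → ℝ)) := by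
    ext c
    rw [hmem]
    constructor
    · intro h; exact ⟨L.symm c, h, by simp⟩
    · rintro ⟨z, hz, rfl⟩; simpa using hz
  have h1 : finrank ℝ (dualComp D) = finrank ℝ D'ᗮ := by
    rw [hDC]; exact LinearEquiv.finrank_map_eq L D'ᗮ
  have h2 : finrank ℝ D' = finrank ℝ D := LinearEquiv.finrank_map_eq L.symm D
  have h3 := Submodule.finrank_add_finrank_orthogonal (𝕜 := ℝ) D'
  rw [finrank_euclideanSpace_fin] at h3
  omega




variable (p : ℕ) [Fact p.Prime]

/-- `m_f(b)` as a finite minimum over the support. -/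
noncomputable def mm {n : ℕ} (f : MvPolynomial (Fin n) ℤ_[p]) (b : Fin n → ℝ) : ℝ :=
  if h : f.support.Nonempty then f.support.inf' h fun ω => dotL b (natVec ω) else 0

variable {n : ℕ} {f : MvPolynomial (Fin n) ℤ_[p]}

lemma mm_def (hf0 : f ≠ 0) (b : Fin n → ℝ) :
    mm p f b = f.support.inf' (MvPolynomial.support_nonempty.mpr hf0)
      (fun ω => dotL b (natVec ω)) := by
  rw [mm, dif_pos]

lemma mm_le_mem (hf0 : f ≠ 0) {b : Fin n → ℝ} {ω : Fin n →₀ ℕ} (hω : ω ∈ f.support) :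
    mm p f b ≤ dotL b (natVec ω) := by
  rw [mm_def p hf0]; exact Finset.inf'_le _ hω

lemma exists_mm (hf0 : f ≠ 0) (b : Fin n → ℝ) :
    ∃ ω ∈ f.support, dotL b (natVec ω) = mm p f b := by
  obtain ⟨ω, hω, h⟩ := Finset.exists_mem_eq_inf' (MvPolynomial.support_nonempty.mpr hf0)
    (fun ω => dotL b (natVec (⇑ω)))
  exact ⟨ω, hω, by rw [mm_def p hf0, h]⟩

lemma mem_NP {ω : Fin n →₀ ℕ} (hω : ω ∈ f.support) :
    natVec ω ∈ NewtonPolyhedron p f := by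
  apply subset_convexHull
  exact Set.mem_biUnion hω (fun i => le_refl _)

lemma NP_ge (hf0 : f ≠ 0) {b : Fin n → ℝ} (hb : ∀ i, 0 ≤ b i) {x : Fin n → ℝ}
    (hx : x ∈ NewtonPolyhedron p f) : mm p f b ≤ dotL b x := by
  have : NewtonPolyhedron p f ⊆ {x | mm p f b ≤ dotL b x} := by
    apply convexHull_min
    · intro x hx
      obtain ⟨s, ⟨ω, rfl⟩, hs⟩ := hx
      simp only [Set.mem_iUnion, Set.mem_setOf_eq] at hs
      obtain ⟨hω, hxω⟩ := hs
      calc mm p f b ≤ dotL b (natVec ω) := mm_le_mem p hf0 hω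
        _ ≤ dotL b x := by
            rw [dotL_apply, dotL_apply]
            exact Finset.sum_le_sum fun i _ => mul_le_mul_of_nonneg_left (hxω i) (hb i)
    · exact convex_halfSpace_ge (LinearMap.isLinear (dotL b)) _
  exact this hx

lemma NP_add (hx : x ∈ NewtonPolyhedron p f) {v : Fin n → ℝ} (hv : ∀ i, 0 ≤ v i) :
    x + v ∈ NewtonPolyhedron p f := by
  have : NewtonPolyhedron p f ⊆ {y | y + v ∈ NewtonPolyhedron p f} := by
    apply convexHull_min
    · intro y hy
      obtain ⟨s, ⟨ω, rfl⟩, hs⟩ := hy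
      simp only [Set.mem_iUnion, Set.mem_setOf_eq] at hs
      obtain ⟨hω, hyω⟩ := hs
      apply subset_convexHull
      apply Set.mem_biUnion hω
      intro i
      calc (ω i : ℝ) ≤ y i := hyω i
        _ ≤ y i + v i := le_add_of_nonneg_right (hv i)
    · have : {y | y + v ∈ NewtonPolyhedron p f} =
          (fun y : Fin n → ℝ => v + y) ⁻¹' NewtonPolyhedron p f := by
        ext y; simp [Set.mem_preimage, add_comm]
      rw [this]
      exact (convex_convexHull ℝ _).translate_preimage_right v
  exact this hx

lemma mReal_eq_mm (hf0 : f ≠ 0) {b : Fin n → ℝ} (hb : ∀ i, 0 ≤ b i) :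
    mReal p f b = mm p f b := by
  obtain ⟨ω, hω, hωm⟩ := exists_mm p hf0 b
  apply le_antisymm
  · apply csInf_le
    · exact ⟨mm p f b, by rintro r ⟨x, hx, rfl⟩; exact NP_ge p hf0 hb hx⟩
    · exact ⟨natVec ω, mem_NP p hω, hωm⟩
  · apply le_csInf
    · exact ⟨dotL b (natVec ω), natVec ω, mem_NP p hω, rfl⟩
    · rintro r ⟨x, hx, rfl⟩; exact NP_ge p hf0 hb hx

lemma FML_eq (hf0 : f ≠ 0) {b : Fin n → ℝ} (hb : ∀ i, 0 ≤ b i) :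
    FML p f b = {x ∈ NewtonPolyhedron p f | dotL b x = mm p f b} := by
  rw [FML]
  ext x
  simp only [Set.mem_setOf_eq, mReal_eq_mm p hf0 hb, dotL_apply]

lemma mem_FML_nat (hf0 : f ≠ 0) {b : Fin n → ℝ} (hb : ∀ i, 0 ≤ b i) {ω : Fin n →₀ ℕ}
    (hω : ω ∈ f.support) (h : dotL b (natVec ω) = mm p f b) : natVec ω ∈ FML p f b := by
  rw [FML_eq p hf0 hb]
  exact ⟨mem_NP p hω, h⟩



/-- Monotonicity: if the argmin of `a` is contained in that of `b` and zeros of `a`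
are zeros of `b`, then `F(a) ⊆ F(b)`. -/
lemma MONO (hf0 : f ≠ 0) {a b : Fin n → ℝ} (ha : ∀ i, 0 ≤ a i) (hb : ∀ i, 0 ≤ b i)
    (H1 : ∀ ω ∈ f.support, dotL a (natVec ω) = mm p f a → dotL b (natVec ω) = mm p f b)
    (H2 : ∀ i, a i = 0 → b i = 0) : FML p f a ⊆ FML p f b := by
  classical
  -- choose a big constant C
  set g : (Fin n →₀ ℕ) → ℝ := fun ω =>
    if dotL a (natVec ω) - mm p f a ≤ 0 then 0
    else (dotL b (natVec ω) - mm p f b) / (dotL a (natVec ω) - mm p f a) with hg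
  set h : Fin n → ℝ := fun i => if a i = 0 then 0 else max 0 (b i / a i) with hh
  have hS := MvPolynomial.support_nonempty.mpr hf0
  set C : ℝ := f.support.sup' hS g + ∑ i, h i with hC
  have hgnonneg : ∀ ω ∈ f.support, 0 ≤ g ω := by
    intro ω hω
    rw [hg]
    dsimp only
    split_ifs with h1
    · exact le_refl _
    · push_neg at h1
      apply div_nonneg _ (le_of_lt (by linarith))
      have := mm_le_mem p hf0 (b := b) hω
      linarith
  have hsupnn : 0 ≤ f.support.sup' hS g := by
    obtain ⟨ω, hω⟩ := hS
    exact le_trans (hgnonneg ω hω) (Finset.le_sup' g hω)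
  have hhnonneg : ∀ i, 0 ≤ h i := by
    intro i; rw [hh]; dsimp only; split_ifs
    · exact le_refl _
    · exact le_max_left _ _
  have hCg : ∀ ω ∈ f.support, g ω ≤ C := by
    intro ω hω
    rw [hC]
    have : (0:ℝ) ≤ ∑ i, h i := Finset.sum_nonneg fun i _ => hhnonneg i
    linarith [Finset.le_sup' g hω]
  have hCh : ∀ i, h i ≤ C := by
    intro i
    rw [hC]
    have : h i ≤ ∑ j, h j :=
      Finset.single_le_sum (fun j _ => hhnonneg j) (Finset.mem_univ i)
    linarith
  have hCnn : 0 ≤ C := by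
    rw [hC]
    have : (0:ℝ) ≤ ∑ i, h i := Finset.sum_nonneg fun i _ => hhnonneg i
    linarith
  -- key inequality on support points
  have key1 : ∀ ω ∈ f.support,
      dotL b (natVec ω) - mm p f b ≤ C * (dotL a (natVec ω) - mm p f a) := by
    intro ω hω
    have hma := mm_le_mem p hf0 (b := a) hω
    rcases eq_or_lt_of_le hma with heq | hlt
    · rw [H1 ω hω heq.symm, ← heq]
      simp
    · have hgω : g ω = (dotL b (natVec ω) - mm p f b) / (dotL a (natVec ω) - mm p f a) := by
        rw [hg]; dsimp only; rw [if_neg (by linarith)]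
      have hCge := hCg ω hω
      rw [hgω] at hCge
      have hpos : 0 < dotL a (natVec ω) - mm p f a := by linarith
      calc dotL b (natVec ω) - mm p f b
          = ((dotL b (natVec ω) - mm p f b) / (dotL a (natVec ω) - mm p f a))
            * (dotL a (natVec ω) - mm p f a) := by field_simp
        _ ≤ C * (dotL a (natVec ω) - mm p f a) :=
            mul_le_mul_of_nonneg_right hCge (le_of_lt hpos)
  -- key inequality on coordinates
  have key2 : ∀ i, b i ≤ C * a i := by
    intro i
    rcases eq_or_lt_of_le (ha i) with heq | hlt
    · rw [H2 i heq.symm, ← heq, mul_zero]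
    · have : h i = max 0 (b i / a i) := by rw [hh]; dsimp only; rw [if_neg (by linarith)]
      have hCi := hCh i
      rw [this] at hCi
      have : b i / a i ≤ C := le_trans (le_max_right _ _) hCi
      calc b i = (b i / a i) * a i := by field_simp
        _ ≤ C * a i := mul_le_mul_of_nonneg_right this (le_of_lt hlt)
  -- the affine inequality holds on all of the Newton polyhedron
  have main : ∀ x ∈ NewtonPolyhedron p f,
      dotL b x - mm p f b ≤ C * (dotL a x - mm p f a) := by
    intro x hx
    have hsub : NewtonPolyhedron p f ⊆
        {x | C * mm p f a - mm p f b ≤ (C • dotL a - dotL b) x} := by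
      apply convexHull_min
      · intro x hx
        obtain ⟨s, ⟨ω, rfl⟩, hs⟩ := hx
        simp only [Set.mem_iUnion, Set.mem_setOf_eq] at hs
        obtain ⟨hω, hxω⟩ := hs
        simp only [Set.mem_setOf_eq, LinearMap.smul_apply, LinearMap.sub_apply, smul_eq_mul]
        have e1 : dotL b x ≤ dotL b (natVec ω) + C * (dotL a x - dotL a (natVec ω)) := by
          rw [dotL_apply, dotL_apply, dotL_apply, dotL_apply, ← Finset.sum_sub_distrib,
            Finset.mul_sum, ← Finset.sum_add_distrib]
          apply Finset.sum_le_sum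
          intro i _
          have hxi : (0:ℝ) ≤ x i - natVec ω i := by
            have := hxω i; simp only [natVec]; linarith
          have : b i * (x i - natVec ω i) ≤ C * (a i * (x i - natVec ω i)) := by
            rw [← mul_assoc]
            exact mul_le_mul_of_nonneg_right (key2 i) hxi
          nlinarith [this]
        have e2 := key1 ω hω
        rw [mul_sub] at e1 e2
        linarith
      · exact convex_halfSpace_ge (LinearMap.isLinear _) _
    have := hsub hx
    simp only [Set.mem_setOf_eq, LinearMap.smul_apply, LinearMap.sub_apply, smul_eq_mul] at this
    rw [mul_sub]
    linarith
  -- conclude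
  intro x hx
  rw [FML_eq p hf0 ha] at hx
  obtain ⟨hxNP, hxa⟩ := hx
  rw [FML_eq p hf0 hb]
  refine ⟨hxNP, le_antisymm ?_ (NP_ge p hf0 hb hxNP)⟩
  have := main x hxNP
  rw [hxa] at this
  simp at this
  linarith

lemma EXT1 (hf0 : f ≠ 0) {a b : Fin n → ℝ} (ha : ∀ i, 0 ≤ a i) (hb : ∀ i, 0 ≤ b i)
    (h : FML p f a ⊆ FML p f b) :
    ∀ ω ∈ f.support, dotL a (natVec ω) = mm p f a → dotL b (natVec ω) = mm p f b := by
  intro ω hω hωa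
  have := h (mem_FML_nat p hf0 ha hω hωa)
  rw [FML_eq p hf0 hb] at this
  exact this.2

lemma EXT2 (hf0 : f ≠ 0) {a b : Fin n → ℝ} (ha : ∀ i, 0 ≤ a i) (hb : ∀ i, 0 ≤ b i)
    (h : FML p f a ⊆ FML p f b) : ∀ i, a i = 0 → b i = 0 := by
  intro i hai
  obtain ⟨ω, hω, hωm⟩ := exists_mm p hf0 a
  have hbase : natVec ω ∈ FML p f a := mem_FML_nat p hf0 ha hω hωm
  have hshift : natVec ω + Pi.single i 1 ∈ FML p f a := by
    rw [FML_eq p hf0 ha] at hbase ⊢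
    constructor
    · exact NP_add p hbase.1 (fun j => by
        by_cases hj : j = i <;> simp [Pi.single_apply, hj])
    · rw [map_add, dotL_single, hai, add_zero]
      exact hbase.2
  have h1 := h hbase
  have h2 := h hshift
  rw [FML_eq p hf0 hb] at h1 h2
  have := h2.2
  rw [map_add, dotL_single, h1.2] at this
  linarith

/-- `F` is determined by the pair (argmin, zero set). -/
lemma FML_eq_of_pair (hf0 : f ≠ 0) {a b : Fin n → ℝ} (ha : ∀ i, 0 ≤ a i) (hb : ∀ i, 0 ≤ b i)
    (H1 : ∀ ω ∈ f.support, dotL a (natVec ω) = mm p f a ↔ dotL b (natVec ω) = mm p f b)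
    (H2 : ∀ i, a i = 0 ↔ b i = 0) : FML p f a = FML p f b :=
  le_antisymm
    (MONO p hf0 ha hb (fun ω hω h => (H1 ω hω).mp h) (fun i h => (H2 i).mp h))
    (MONO p hf0 hb ha (fun ω hω h => (H1 ω hω).mpr h) (fun i h => (H2 i).mpr h))

lemma mm_eq_of_min (hf0 : f ≠ 0) {b : Fin n → ℝ} {ω₀ : Fin n →₀ ℕ} (hω₀ : ω₀ ∈ f.support)
    (h : ∀ ω ∈ f.support, dotL b (natVec ω₀) ≤ dotL b (natVec ω)) :
    mm p f b = dotL b (natVec ω₀) := by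
  obtain ⟨ω, hω, hωm⟩ := exists_mm p hf0 b
  exact le_antisymm (mm_le_mem p hf0 hω₀) (by rw [← hωm]; exact h ω hω)



lemma dotL_expand {n : ℕ} (b c x : Fin n → ℝ) (t : ℝ) :
    dotL (b + t • c) x = dotL b x + t * dotL c x := by
  rw [dotL_add_left, dotL_smul_left]

/-- Perturbation lemma: perturbing `b` by a small multiple of `c` (where `c` is
constant on the argmin of `b` and vanishes where `b` does) preserves the
combinatorial data (argmin, zero set). -/
lemma PERT (hf0 : f ≠ 0) {b c : Fin n → ℝ} (hb : ∀ i, 0 ≤ b i)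
    {ω₀ : Fin n →₀ ℕ} (hω₀ : ω₀ ∈ f.support) (hmin : dotL b (natVec ω₀) = mm p f b)
    (hcc : ∀ ω ∈ f.support, dotL b (natVec ω) = mm p f b →
      dotL c (natVec ω) = dotL c (natVec ω₀))
    (hz : ∀ i, b i = 0 → c i = 0) :
    ∃ ε > 0, ∀ t : ℝ, |t| < ε →
      (∀ i, 0 ≤ b i + t * c i) ∧ (∀ i, b i + t * c i = 0 ↔ b i = 0) ∧
      (∀ ω ∈ f.support,
        dotL (b + t • c) (natVec ω) = mm p f (b + t • c) ↔
          dotL b (natVec ω) = mm p f b) := by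
  classical
  have h1 : ∀ i : Fin n, ∀ᶠ t in nhds (0:ℝ), b i = 0 ∨ 0 < b i + t * c i := by
    intro i
    by_cases hbi : b i = 0
    · exact Filter.Eventually.of_forall fun t => Or.inl hbi
    · have hpos : 0 < b i := lt_of_le_of_ne (hb i) (Ne.symm hbi)
      have hcont : Continuous fun t : ℝ => b i + t * c i := by continuity
      have hmem : {t : ℝ | 0 < b i + t * c i} ∈ nhds (0:ℝ) := by
        apply IsOpen.mem_nhds (isOpen_lt continuous_const hcont)
        simpa using hpos
      exact Filter.eventually_of_mem hmem fun t ht => Or.inr ht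
  have h2 : ∀ ω ∈ f.support, ∀ᶠ t in nhds (0:ℝ),
      dotL b (natVec ω) = mm p f b ∨
      dotL b (natVec ω₀) + t * dotL c (natVec ω₀)
        < dotL b (natVec ω) + t * dotL c (natVec ω) := by
    intro ω hω
    by_cases hωm : dotL b (natVec ω) = mm p f b
    · exact Filter.Eventually.of_forall fun t => Or.inl hωm
    · have hlt : mm p f b < dotL b (natVec ω) :=
        lt_of_le_of_ne (mm_le_mem p hf0 hω) (Ne.symm hωm)
      have hcont1 : Continuous fun t : ℝ =>
          dotL b (natVec ω₀) + t * dotL c (natVec ω₀) := by continuity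
      have hcont2 : Continuous fun t : ℝ =>
          dotL b (natVec ω) + t * dotL c (natVec ω) := by continuity
      have hmem : {t : ℝ | dotL b (natVec ω₀) + t * dotL c (natVec ω₀)
          < dotL b (natVec ω) + t * dotL c (natVec ω)} ∈ nhds (0:ℝ) := by
        apply IsOpen.mem_nhds (isOpen_lt hcont1 hcont2)
        simp only [Set.mem_setOf_eq, zero_mul, add_zero]
        rw [hmin]; exact hlt
      exact Filter.eventually_of_mem hmem fun t ht => Or.inr ht
  have hA : ∀ᶠ t in nhds (0:ℝ), ∀ i, b i = 0 ∨ 0 < b i + t * c i :=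
    Filter.eventually_all.mpr h1
  have hB : ∀ᶠ t in nhds (0:ℝ), ∀ ω ∈ f.support,
      dotL b (natVec ω) = mm p f b ∨
      dotL b (natVec ω₀) + t * dotL c (natVec ω₀)
        < dotL b (natVec ω) + t * dotL c (natVec ω) :=
    (Filter.eventually_all_finset f.support).mpr h2
  obtain ⟨ε, hε, hball⟩ := Metric.eventually_nhds_iff.mp (hA.and hB)
  refine ⟨ε, hε, ?_⟩
  intro t ht
  have htd : dist t (0:ℝ) < ε := by rwa [Real.dist_eq, sub_zero]
  obtain ⟨hP1, hP2⟩ := hball htd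
  -- coordinates
  have hco : ∀ i, 0 ≤ b i + t * c i := by
    intro i
    rcases hP1 i with h0 | hpos
    · rw [h0, hz i h0]; simp
    · exact le_of_lt hpos
  have hiff0 : ∀ i, b i + t * c i = 0 ↔ b i = 0 := by
    intro i
    constructor
    · intro h
      rcases hP1 i with h0 | hpos
      · exact h0
      · exact absurd h (ne_of_gt hpos)
    · intro h0; rw [h0, hz i h0]; simp
  -- values agree on the argmin of b
  have hval : ∀ ω ∈ f.support, dotL b (natVec ω) = mm p f b →
      dotL (b + t • c) (natVec ω) = dotL (b + t • c) (natVec ω₀) := by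
    intro ω hω hωm
    rw [dotL_expand, dotL_expand, hωm, ← hmin, hcc ω hω hωm]
  -- ω₀ is a minimizer for b + t • c
  have hmin' : ∀ ω ∈ f.support,
      dotL (b + t • c) (natVec ω₀) ≤ dotL (b + t • c) (natVec ω) := by
    intro ω hω
    rcases hP2 ω hω with hωm | hstrict
    · rw [hval ω hω hωm]
    · rw [dotL_expand, dotL_expand]; exact le_of_lt hstrict
  have hmm' : mm p f (b + t • c) = dotL (b + t • c) (natVec ω₀) :=
    mm_eq_of_min p hf0 hω₀ hmin'
  refine ⟨hco, hiff0, ?_⟩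
  intro ω hω
  constructor
  · intro h
    by_contra hne
    rcases hP2 ω hω with hωm | hstrict
    · exact hne hωm
    · have hlt : dotL (b + t • c) (natVec ω₀) < dotL (b + t • c) (natVec ω) := by
        rw [dotL_expand, dotL_expand]; exact hstrict
      rw [← hmm'] at hlt
      exact (ne_of_gt hlt) h
  · intro hωm
    rw [hval ω hω hωm, hmm']



lemma mem_dualComp_span {n : ℕ} {G : Set (Fin n → ℝ)} {c : Fin n → ℝ}
    (h : ∀ d ∈ G, dotL c d = 0) : c ∈ dualComp (Submodule.span ℝ G) := by
  intro d hd
  have hle : Submodule.span ℝ G ≤ LinearMap.ker (dotL c) :=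
    Submodule.span_le.mpr fun g hg => LinearMap.mem_ker.mpr (h g hg)
  exact LinearMap.mem_ker.mp (hle hd)

/-- Membership in the "normal cone" `K` in combinatorial terms. -/
lemma mem_K_iff (hf0 : f ≠ 0) {a0 b : Fin n → ℝ} (ha0nn : ∀ i, 0 ≤ a0 i) :
    ((∀ i, 0 ≤ b i) ∧ FML p f a0 ⊆ FML p f b) ↔
      ((∀ i, 0 ≤ b i) ∧ (∀ i, a0 i = 0 → b i = 0) ∧
        ∀ ω ∈ f.support, dotL a0 (natVec ω) = mm p f a0 →
          dotL b (natVec ω) = mm p f b) := by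
  constructor
  · rintro ⟨hb, hsub⟩
    exact ⟨hb, EXT2 p hf0 ha0nn hb hsub, EXT1 p hf0 ha0nn hb hsub⟩
  · rintro ⟨hb, hz, hm⟩
    exact ⟨hb, MONO p hf0 ha0nn hb hm hz⟩

lemma sum_smul_apply {n e : ℕ} (lam : Fin e → ℝ) (w : Fin e → (Fin n → ℝ)) (j : Fin n) :
    (∑ i, lam i • w i) j = ∑ i, lam i * w i j := by
  rw [Finset.sum_apply]
  simp

lemma dotL_sum_right {n e : ℕ} (x : Fin n → ℝ) (lam : Fin e → ℝ) (w : Fin e → (Fin n → ℝ)) :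
    dotL x (∑ i, lam i • w i) = ∑ i, lam i * dotL x (w i) := by
  rw [map_sum]
  simp

lemma dotL_sum_left {n e : ℕ} (x : Fin n → ℝ) (lam : Fin e → ℝ) (w : Fin e → (Fin n → ℝ)) :
    dotL (∑ i, lam i • w i) x = ∑ i, lam i * dotL (w i) x := by
  rw [dotL_comm, dotL_sum_right]
  congr 1; ext i; rw [dotL_comm]

/-- The nonnegative span of the facet normals is contained in `K`. -/
lemma cone_subset_K (hf0 : f ≠ 0) {a0 : Fin n → ℝ} (ha0nn : ∀ i, 0 ≤ a0 i)
    {e : ℕ} {a : Fin e → (Fin n → ℕ)}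
    (haK : ∀ i, (∀ j, (0:ℝ) ≤ natVec (a i) j) ∧ FML p f a0 ⊆ FML p f (natVec (a i))) :
    {x : Fin n → ℝ | ∃ lam : Fin e → ℝ, (∀ i, 0 ≤ lam i) ∧ x = ∑ i, lam i • natVec (a i)}
      ⊆ {b | (∀ i, 0 ≤ b i) ∧ FML p f a0 ⊆ FML p f b} := by
  rintro x ⟨lam, hlam, rfl⟩
  rw [Set.mem_setOf_eq, mem_K_iff p hf0 ha0nn]
  have haK' : ∀ i, (∀ j, (0:ℝ) ≤ natVec (a i) j) ∧ (∀ j, a0 j = 0 → natVec (a i) j = 0) ∧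
      ∀ ω ∈ f.support, dotL a0 (natVec ω) = mm p f a0 →
        dotL (natVec (a i)) (natVec ω) = mm p f (natVec (a i)) := by
    intro i
    exact (mem_K_iff p hf0 ha0nn).mp (haK i)
  refine ⟨?_, ?_, ?_⟩
  · intro j
    rw [sum_smul_apply]
    exact Finset.sum_nonneg fun i _ => mul_nonneg (hlam i) ((haK' i).1 j)
  · intro j hj
    rw [sum_smul_apply]
    apply Finset.sum_eq_zero
    intro i _
    rw [(haK' i).2.1 j hj, mul_zero]
  · intro ω hω hωm
    refine (mm_eq_of_min p hf0 hω ?_).symm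
    intro ω' hω'
    rw [dotL_sum_left, dotL_sum_left]
    apply Finset.sum_le_sum
    intro i _
    apply mul_le_mul_of_nonneg_left _ (hlam i)
    rw [(haK' i).2.2 ω hω hωm]
    exact mm_le_mem p hf0 hω'

/-- `K` is convex. -/
lemma K_convex (hf0 : f ≠ 0) {a0 : Fin n → ℝ} (ha0nn : ∀ i, 0 ≤ a0 i) :
    Convex ℝ {b : Fin n → ℝ | (∀ i, 0 ≤ b i) ∧ FML p f a0 ⊆ FML p f b} := by
  intro b1 hb1 b2 hb2 s t hs ht hst
  rw [Set.mem_setOf_eq, mem_K_iff p hf0 ha0nn]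
  rw [Set.mem_setOf_eq, mem_K_iff p hf0 ha0nn] at hb1 hb2
  obtain ⟨h1nn, h1z, h1m⟩ := hb1
  obtain ⟨h2nn, h2z, h2m⟩ := hb2
  have happ : ∀ j, (s • b1 + t • b2) j = s * b1 j + t * b2 j := fun j => rfl
  refine ⟨?_, ?_, ?_⟩
  · intro j
    rw [happ]
    exact add_nonneg (mul_nonneg hs (h1nn j)) (mul_nonneg ht (h2nn j))
  · intro j hj
    rw [happ, h1z j hj, h2z j hj, mul_zero, mul_zero, add_zero]
  · intro ω hω hωm
    have hdot : ∀ y : Fin n → ℝ, dotL (s • b1 + t • b2) y = s * dotL b1 y + t * dotL b2 y := by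
      intro y
      rw [dotL_add_left, dotL_smul_left, dotL_smul_left]
    refine (mm_eq_of_min p hf0 hω ?_).symm
    intro ω' hω'
    rw [hdot, hdot]
    have e1 : dotL b1 (natVec ω) ≤ dotL b1 (natVec ω') := by
      rw [h1m ω hω hωm]; exact mm_le_mem p hf0 hω'
    have e2 : dotL b2 (natVec ω) ≤ dotL b2 (natVec ω') := by
      rw [h2m ω hω hωm]; exact mm_le_mem p hf0 hω'
    have := mul_le_mul_of_nonneg_left e1 hs
    have := mul_le_mul_of_nonneg_left e2 ht
    linarith

/-- `K` is closed. -/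
lemma K_closed (hf0 : f ≠ 0) {a0 : Fin n → ℝ} (ha0nn : ∀ i, 0 ≤ a0 i) :
    IsClosed {b : Fin n → ℝ | (∀ i, 0 ≤ b i) ∧ FML p f a0 ⊆ FML p f b} := by
  have hdesc : {b : Fin n → ℝ | (∀ i, 0 ≤ b i) ∧ FML p f a0 ⊆ FML p f b} =
      {b | ∀ i, 0 ≤ b i} ∩ ({b | ∀ i, a0 i = 0 → b i = 0} ∩
        {b | ∀ ω ∈ f.support, dotL a0 (natVec ω) = mm p f a0 →
          ∀ ω' ∈ f.support, dotL b (natVec ω) ≤ dotL b (natVec ω')}) := by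
    ext b
    rw [Set.mem_setOf_eq, mem_K_iff p hf0 ha0nn]
    simp only [Set.mem_inter_iff, Set.mem_setOf_eq]
    constructor
    · rintro ⟨h1, h2, h3⟩
      refine ⟨h1, h2, ?_⟩
      intro ω hω hωm ω' hω'
      rw [h3 ω hω hωm]
      exact mm_le_mem p hf0 hω'
    · rintro ⟨h1, h2, h3⟩
      refine ⟨h1, h2, ?_⟩
      intro ω hω hωm
      exact (mm_eq_of_min p hf0 hω (h3 ω hω hωm)).symm
  rw [hdesc]
  have hc : ∀ y : Fin n → ℝ, Continuous fun b : Fin n → ℝ => dotL b y := by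
    intro y
    simp only [dotL_apply]
    exact continuous_finset_sum _ fun i _ => (continuous_apply i).mul continuous_const
  refine IsClosed.inter ?_ (IsClosed.inter ?_ ?_)
  · have : {b : Fin n → ℝ | ∀ i, 0 ≤ b i} = ⋂ i, {b : Fin n → ℝ | 0 ≤ b i} := by
      ext b; simp
    rw [this]
    exact isClosed_iInter fun i => isClosed_le continuous_const (continuous_apply i)
  · have : {b : Fin n → ℝ | ∀ i, a0 i = 0 → b i = 0} =
        ⋂ i, {b : Fin n → ℝ | a0 i = 0 → b i = 0} := by ext b; simp
    rw [this]
    apply isClosed_iInter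
    intro i
    by_cases h : a0 i = 0
    · have : {b : Fin n → ℝ | a0 i = 0 → b i = 0} = {b | b i = 0} := by
        ext b; simp [h]
      rw [this]
      exact isClosed_eq (continuous_apply i) continuous_const
    · have : {b : Fin n → ℝ | a0 i = 0 → b i = 0} = Set.univ := by
        ext b; simp [h]
      rw [this]
      exact isClosed_univ
  · have : {b : Fin n → ℝ | ∀ ω ∈ f.support, dotL a0 (natVec ω) = mm p f a0 →
        ∀ ω' ∈ f.support, dotL b (natVec ω) ≤ dotL b (natVec ω')} =
        ⋂ ω ∈ f.support, ⋂ ω' ∈ f.support,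
          {b : Fin n → ℝ | dotL a0 (natVec ω) = mm p f a0 →
            dotL b (natVec ω) ≤ dotL b (natVec ω')} := by
      ext b; simp only [Set.mem_iInter, Set.mem_setOf_eq]; tauto
    rw [this]
    apply isClosed_biInter
    intro ω hω
    apply isClosed_biInter
    intro ω' hω'
    by_cases h : dotL a0 (natVec ω) = mm p f a0
    · have : {b : Fin n → ℝ | dotL a0 (natVec ω) = mm p f a0 →
          dotL b (natVec ω) ≤ dotL b (natVec ω')} =
          {b | dotL b (natVec ω) ≤ dotL b (natVec ω')} := by ext b; simp [h]
      rw [this]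
      exact isClosed_le (hc _) (hc _)
    · have : {b : Fin n → ℝ | dotL a0 (natVec ω) = mm p f a0 →
          dotL b (natVec ω) ≤ dotL b (natVec ω')} = Set.univ := by ext b; simp [h]
      rw [this]
      exact isClosed_univ

/-- The cone over the `a i`'s is convex. -/
lemma cone_convex {n e : ℕ} (w : Fin e → (Fin n → ℝ)) :
    Convex ℝ {x : Fin n → ℝ | ∃ lam : Fin e → ℝ, (∀ i, 0 ≤ lam i) ∧
      x = ∑ i, lam i • w i} := by
  rintro x ⟨lam, hlam, rfl⟩ y ⟨mu, hmu, rfl⟩ s t hs ht hst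
  refine ⟨fun i => s * lam i + t * mu i,
    fun i => add_nonneg (mul_nonneg hs (hlam i)) (mul_nonneg ht (hmu i)), ?_⟩
  rw [Finset.smul_sum, Finset.smul_sum, ← Finset.sum_add_distrib]
  congr 1
  ext i
  rw [smul_smul, smul_smul, add_smul]



/-- Key lemma (via Krein–Milman): the normal cone `K` of the face `F(a0)` is contained
in the nonnegative span of the primitive facet normals. -/
lemma K_subset_cone (hf0 : f ≠ 0) {a0 : Fin n → ℝ} (ha0nn : ∀ i, 0 ≤ a0 i)
    {e : ℕ} {γ : Fin e → Set (Fin n → ℝ)}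
    (hγdim : ∀ i, Module.finrank ℝ (vectorSpan ℝ (γ i)) = n - 1)
    (hγall : ∀ γ' : Set (Fin n → ℝ), IsFacet p f γ' → FML p f a0 ⊆ γ' → ∃ i, γ' = γ i)
    {a : Fin e → (Fin n → ℕ)} (hane : ∀ i, a i ≠ 0)
    (haF : ∀ i, FML p f (natVec (a i)) = γ i) :
    {b : Fin n → ℝ | (∀ i, 0 ≤ b i) ∧ FML p f a0 ⊆ FML p f b} ⊆
      {x | ∃ lam : Fin e → ℝ, (∀ i, 0 ≤ lam i) ∧ x = ∑ i, lam i • natVec (a i)} := by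
  classical
  set K : Set (Fin n → ℝ) := {b | (∀ i, 0 ≤ b i) ∧ FML p f a0 ⊆ FML p f b} with hKdef
  set cone : Set (Fin n → ℝ) :=
    {x | ∃ lam : Fin e → ℝ, (∀ i, 0 ≤ lam i) ∧ x = ∑ i, lam i • natVec (a i)} with hconedef
  set B : Set (Fin n → ℝ) := {b | b ∈ K ∧ ∑ j, b j = 1} with hBdef
  have hsumc : Continuous fun b : Fin n → ℝ => ∑ j, b j :=
    continuous_finset_sum _ fun i _ => continuous_apply i
  have hBconv : Convex ℝ B := by
    intro b1 hb1 b2 hb2 s t hs ht hst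
    refine ⟨K_convex p hf0 ha0nn hb1.1 hb2.1 hs ht hst, ?_⟩
    have : ∀ j, (s • b1 + t • b2) j = s * b1 j + t * b2 j := fun j => rfl
    simp only [this]
    rw [Finset.sum_add_distrib, ← Finset.mul_sum, ← Finset.mul_sum, hb1.2, hb2.2]
    simpa using hst
  have hBcl : IsClosed B := (K_closed p hf0 ha0nn).inter (isClosed_eq hsumc continuous_const)
  have hBcomp : IsCompact B := by
    apply IsCompact.of_isClosed_subset (isCompact_univ_pi fun _ : Fin n => isCompact_Icc
      (a := (0:ℝ)) (b := 1)) hBcl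
    intro b hb
    rw [Set.mem_univ_pi]
    intro j
    refine ⟨hb.1.1 j, ?_⟩
    rw [← hb.2]
    exact Finset.single_le_sum (fun i _ => hb.1.1 i) (Finset.mem_univ j)
  set R : Set (Fin n → ℝ) :=
    Set.range fun i : Fin e => (∑ j, natVec (a i) j)⁻¹ • natVec (a i) with hRdef
  -- extreme points of B lie in R
  have hext : Set.extremePoints ℝ B ⊆ R := by
    intro x hx
    rw [mem_extremePoints] at hx
    obtain ⟨⟨hxK, hxsum⟩, hxext⟩ := hx
    obtain ⟨hxnn, hxz, hxm⟩ := (mem_K_iff p hf0 ha0nn).mp hxK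
    have hxne : x ≠ 0 := by
      intro h
      rw [h] at hxsum
      simp at hxsum
    obtain ⟨i0, hi0⟩ := Function.ne_iff.mp hxne
    obtain ⟨ωx, hωx, hωxm⟩ := exists_mm p hf0 x
    set G : Set (Fin n → ℝ) := {d | ∃ ω ∈ f.support, ∃ ω' ∈ f.support,
        dotL x (natVec ω) = mm p f x ∧ dotL x (natVec ω') = mm p f x ∧
        d = natVec ω - natVec ω'} ∪ {d | ∃ i, x i = 0 ∧ d = Pi.single i 1} with hGdef
    set Vx := Submodule.span ℝ G with hVxdef
    -- lower bound on dim Vx by extremality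
    have hVx : n - 1 ≤ Module.finrank ℝ Vx := by
      by_contra hlt
      push_neg at hlt
      have h2 : 2 ≤ Module.finrank ℝ (dualComp Vx) := by
        rw [finrank_dualComp]
        omega
      set g : dualComp Vx →ₗ[ℝ] ℝ :=
        (dotL fun _ => (1:ℝ)).comp (dualComp Vx).subtype with hgdef
      have hker : LinearMap.ker g ≠ ⊥ := by
        intro hbot
        have h3 := LinearMap.finrank_range_add_finrank_ker g
        rw [hbot, finrank_bot] at h3
        have h4 : Module.finrank ℝ (LinearMap.range g) ≤ 1 := by
          have := Submodule.finrank_le (LinearMap.range g)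
          rwa [finrank_self] at this
        omega
      obtain ⟨u, hu, hune⟩ := Submodule.exists_mem_ne_zero_of_ne_bot hker
      set c : Fin n → ℝ := (u : Fin n → ℝ) with hcdef
      have hcU : ∀ d ∈ Vx, dotL c d = 0 := u.2
      have hcsum : ∑ j, c j = 0 := by
        have h5 := LinearMap.mem_ker.mp hu
        rw [hgdef] at h5
        simp only [LinearMap.comp_apply, Submodule.subtype_apply, dotL_apply, one_mul] at h5
        exact h5
      have hcne : c ≠ 0 := fun h => hune (Submodule.coe_eq_zero.mp h)
      have hcz : ∀ i, x i = 0 → c i = 0 := by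
        intro i hxi
        have := hcU (Pi.single i 1) (Submodule.subset_span (Or.inr ⟨i, hxi, rfl⟩))
        rwa [dotL_single] at this
      have hccst : ∀ ω ∈ f.support, dotL x (natVec ω) = mm p f x →
          dotL c (natVec ω) = dotL c (natVec ωx) := by
        intro ω hω hωm
        have := hcU (natVec ω - natVec ωx)
          (Submodule.subset_span (Or.inl ⟨ω, hω, ωx, hωx, hωm, hωxm, rfl⟩))
        rw [map_sub] at this
        linarith
      obtain ⟨ε, hε, hP⟩ := PERT p hf0 hxnn hωx hωxm hccst hcz
      have hmemB : ∀ s : ℝ, |s| < ε → x + s • c ∈ B := by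
        intro s hs
        obtain ⟨hnn, hiff, hargm⟩ := hP s hs
        constructor
        · refine (mem_K_iff p hf0 ha0nn).mpr ⟨?_, ?_, ?_⟩
          · intro j
            have := hnn j
            simpa using this
          · intro j hj
            have := (hiff j).mpr (hxz j hj)
            simpa using this
          · intro ω hω hωm
            exact (hargm ω hω).mpr (hxm ω hω hωm)
        · show ∑ j, (x + s • c) j = 1
          have : ∀ j, (x + s • c) j = x j + s * c j := fun j => rfl
          simp only [this]
          rw [Finset.sum_add_distrib, ← Finset.mul_sum, hxsum, hcsum, mul_zero, add_zero]
      have ht2 : |ε/2| < ε := by rw [abs_of_pos (by positivity)]; linarith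
      have ht2' : |(-(ε/2))| < ε := by rw [abs_neg]; exact ht2
      have hy1 := hmemB (ε/2) ht2
      have hy2 := hmemB (-(ε/2)) ht2'
      have hseg : x ∈ openSegment ℝ (x + (ε/2) • c) (x + (-(ε/2)) • c) := by
        refine ⟨1/2, 1/2, by norm_num, by norm_num, by norm_num, ?_⟩
        module
      have heq := (hxext _ hy1 _ hy2 hseg).1
      have hzero : (ε/2) • c = 0 := add_eq_left.mp heq
      rcases smul_eq_zero.mp hzero with h | h
      · exact absurd h (by positivity)
      · exact hcne h
    -- Vx is inside the vector span of FML x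
    have hVxle : Vx ≤ vectorSpan ℝ (FML p f x) := by
      rw [hVxdef, Submodule.span_le]
      rintro d (⟨ω, hω, ω', hω', hm1, hm2, rfl⟩ | ⟨i, hxi, rfl⟩)
      · have h1 : natVec ω ∈ FML p f x := mem_FML_nat p hf0 hxnn hω hm1
        have h2 : natVec ω' ∈ FML p f x := mem_FML_nat p hf0 hxnn hω' hm2
        have := vsub_mem_vectorSpan ℝ h1 h2
        rwa [vsub_eq_sub] at this
      · have h1 : natVec ωx ∈ FML p f x := mem_FML_nat p hf0 hxnn hωx hωxm
        have h2 : natVec ωx + Pi.single i 1 ∈ FML p f x := by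
          rw [FML_eq p hf0 hxnn] at h1 ⊢
          refine ⟨NP_add p h1.1 (fun j => by
            by_cases hj : j = i <;> simp [Pi.single_apply, hj]), ?_⟩
          rw [map_add, dotL_single, hxi, add_zero]
          exact h1.2
        have := vsub_mem_vectorSpan ℝ h2 h1
        rw [vsub_eq_sub] at this
        simpa using this
    have hvs_ge : n - 1 ≤ Module.finrank ℝ (vectorSpan ℝ (FML p f x)) :=
      le_trans hVx (Submodule.finrank_mono hVxle)
    -- upper bound
    have hvs_le : Module.finrank ℝ (vectorSpan ℝ (FML p f x)) ≤ n - 1 := by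
      have hle : vectorSpan ℝ (FML p f x) ≤ LinearMap.ker (dotL x) := by
        rw [vectorSpan_def, Submodule.span_le]
        intro d hd
        rw [Set.mem_vsub] at hd
        obtain ⟨y, hy, y', hy', rfl⟩ := hd
        rw [SetLike.mem_coe, LinearMap.mem_ker, vsub_eq_sub, map_sub]
        rw [FML_eq p hf0 hxnn] at hy hy'
        rw [hy.2, hy'.2, sub_self]
      have hkx : Module.finrank ℝ (LinearMap.ker (dotL x)) = n - 1 := by
        have h3 := LinearMap.finrank_range_add_finrank_ker (dotL x)
        rw [finrank_fin_fun] at h3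
        have hrange : Module.finrank ℝ (LinearMap.range (dotL x)) = 1 := by
          have hne : LinearMap.range (dotL x) ≠ ⊥ := by
            intro hbot
            apply hi0
            have hmem : dotL x (Pi.single i0 1) ∈ LinearMap.range (dotL x) :=
              LinearMap.mem_range_self _ _
            rw [hbot, Submodule.mem_bot, dotL_single] at hmem
            exact hmem
          have hle1 : Module.finrank ℝ (LinearMap.range (dotL x)) ≤ 1 := by
            have := Submodule.finrank_le (LinearMap.range (dotL x))
            rwa [finrank_self] at this
          have hne0 : Module.finrank ℝ (LinearMap.range (dotL x)) ≠ 0 := fun h0 =>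
            hne (Submodule.finrank_eq_zero.mp h0)
          omega
        omega
      calc Module.finrank ℝ (vectorSpan ℝ (FML p f x))
          ≤ Module.finrank ℝ (LinearMap.ker (dotL x)) := Submodule.finrank_mono hle
        _ = n - 1 := hkx
    have hfr : Module.finrank ℝ (vectorSpan ℝ (FML p f x)) = n - 1 :=
      le_antisymm hvs_le hvs_ge
    -- FML x is a facet containing the face, so it is some γ i
    have hfacet : IsFacet p f (FML p f x) := by
      refine ⟨Or.inr ⟨x, hxnn, hxne, rfl⟩, ?_⟩
      rw [direction_affineSpan]
      exact hfr
    obtain ⟨i, hi⟩ := hγall (FML p f x) hfacet hxK.2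
    -- x is parallel to natVec (a i)
    have hwnn : ∀ j, (0:ℝ) ≤ natVec (a i) j := fun j => Nat.cast_nonneg _
    have hwne : natVec (a i) ≠ 0 := by
      intro h
      apply hane i
      funext j
      have := congrFun h j
      simpa [natVec] using this
    have hmemW : ∀ z : Fin n → ℝ, FML p f z = γ i → (∀ j, 0 ≤ z j) →
        z ∈ dualComp (vectorSpan ℝ (γ i)) := by
      intro z hz hznn
      have hvs : vectorSpan ℝ (γ i) = Submodule.span ℝ (γ i -ᵥ γ i) := vectorSpan_def ℝ _
      rw [hvs]
      apply mem_dualComp_span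
      intro d hd
      rw [Set.mem_vsub] at hd
      obtain ⟨y, hy, y', hy', rfl⟩ := hd
      rw [← hz] at hy hy'
      rw [FML_eq p hf0 hznn] at hy hy'
      rw [vsub_eq_sub, map_sub, hy.2, hy'.2, sub_self]
    have hxW : x ∈ dualComp (vectorSpan ℝ (γ i)) := hmemW x hi hxnn
    have hwW : natVec (a i) ∈ dualComp (vectorSpan ℝ (γ i)) := hmemW _ (haF i) hwnn
    have hfrW : Module.finrank ℝ (dualComp (vectorSpan ℝ (γ i))) = 1 := by
      rw [finrank_dualComp, hγdim i]
      have := Fin.pos i0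
      omega
    have hwW0 : (⟨natVec (a i), hwW⟩ : dualComp (vectorSpan ℝ (γ i))) ≠ 0 := by
      intro h
      exact hwne (by simpa [Subtype.ext_iff] using h)
    obtain ⟨t, ht⟩ := (finrank_eq_one_iff_of_nonzero'
      (⟨natVec (a i), hwW⟩ : dualComp (vectorSpan ℝ (γ i))) hwW0).mp hfrW ⟨x, hxW⟩
    have hxtw : x = t • natVec (a i) := by
      have := congrArg Subtype.val ht
      simpa using this.symm
    have hwsum : 0 < ∑ j, natVec (a i) j := by
      apply Finset.sum_pos' (fun j _ => hwnn j)
      obtain ⟨j, hj⟩ := Function.ne_iff.mp hwne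
      exact ⟨j, Finset.mem_univ j, lt_of_le_of_ne (hwnn j) (Ne.symm hj)⟩
    have hts : t * (∑ j, natVec (a i) j) = 1 := by
      rw [hxtw] at hxsum
      have : ∀ j, (t • natVec (a i)) j = t * natVec (a i) j := fun j => rfl
      simp only [this] at hxsum
      rwa [← Finset.mul_sum] at hxsum
    have htval : t = (∑ j, natVec (a i) j)⁻¹ := by
      have h := congrArg (fun z => z * (∑ j, natVec (a i) j)⁻¹) hts
      simp only [one_mul] at h
      rw [mul_assoc, mul_inv_cancel₀ hwsum.ne', mul_one] at h
      exact h
    exact ⟨i, by rw [hxtw, htval]⟩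
  -- conclude via Krein–Milman
  have hRcone : R ⊆ cone := by
    rintro x ⟨i, rfl⟩
    refine ⟨fun j => if j = i then (∑ j, natVec (a i) j)⁻¹ else 0, ?_, ?_⟩
    · intro j
      by_cases h : j = i
      · simp only [h, if_pos]
        exact inv_nonneg.mpr (Finset.sum_nonneg fun k _ => Nat.cast_nonneg _)
      · simp [h]
    · rw [Finset.sum_eq_single_of_mem i (Finset.mem_univ i) (fun j _ hj => by simp [hj])]
      simp
  have hBsub : B ⊆ cone := by
    have h1 := closure_convexHull_extremePoints hBcomp hBconv
    intro b hb
    rw [← h1] at hb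
    have h3 : closure (convexHull ℝ (Set.extremePoints ℝ B)) ⊆ closure (convexHull ℝ R) :=
      closure_mono (convexHull_mono hext)
    have h4 : closure (convexHull ℝ R) = convexHull ℝ R :=
      ((Set.Finite.isCompact_convexHull (𝕜 := ℝ) (Set.finite_range _)).isClosed).closure_eq
    have h5 : convexHull ℝ R ⊆ cone := convexHull_min hRcone (cone_convex _)
    exact h5 (h4 ▸ h3 hb)
  intro b hb
  by_cases hb0 : b = 0
  · exact ⟨0, fun i => le_refl 0, by simp [hb0]⟩
  · have hspos : 0 < ∑ j, b j := by
      apply Finset.sum_pos' (fun j _ => hb.1 j)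
      obtain ⟨j, hj⟩ := Function.ne_iff.mp hb0
      exact ⟨j, Finset.mem_univ j, lt_of_le_of_ne (hb.1 j) (Ne.symm hj)⟩
    have hbK := (mem_K_iff p hf0 ha0nn).mp hb
    have hmemK : (∑ j, b j)⁻¹ • b ∈ K := by
      refine (mem_K_iff p hf0 ha0nn).mpr ⟨?_, ?_, ?_⟩
      · intro j
        exact mul_nonneg (by positivity) (hb.1 j)
      · intro j hj
        show (∑ j, b j)⁻¹ * b j = 0
        rw [hbK.2.1 j hj, mul_zero]
      · intro ω hω hωm
        refine (mm_eq_of_min p hf0 hω ?_).symm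
        intro ω' hω'
        rw [dotL_smul_left, dotL_smul_left]
        apply mul_le_mul_of_nonneg_left _ (by positivity)
        rw [hbK.2.2 ω hω hωm]
        exact mm_le_mem p hf0 hω'
    have hmemB : (∑ j, b j)⁻¹ • b ∈ B := by
      refine ⟨hmemK, ?_⟩
      show ∑ j, (∑ j, b j)⁻¹ * b j = 1
      rw [← Finset.mul_sum, inv_mul_cancel₀ hspos.ne']
    obtain ⟨lam, hlam, hx⟩ := hBsub hmemB
    refine ⟨fun i => (∑ j, b j) * lam i, fun i => mul_nonneg hspos.le (hlam i), ?_⟩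
    calc b = (∑ j, b j) • ((∑ j, b j)⁻¹ • b) := by
            rw [smul_smul, mul_inv_cancel₀ hspos.ne', one_smul]
      _ = (∑ j, b j) • ∑ i, lam i • natVec (a i) := by rw [hx]
      _ = ∑ i, ((∑ j, b j) * lam i) • natVec (a i) := by
            rw [Finset.smul_sum]
            exact Finset.sum_congr rfl fun i _ => smul_smul _ _ _



/-- **Lemma (Denef–Hoornaert).** The cone `Δ_τ` associated to a proper face `τ` is
the strictly positive span of the primitive normals `a₁,…,a_e` of the facets
containing `τ`; its closure is `{a ≥ 0 : τ ⊆ F_f(a)}`, which equals the nonnegative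
span; and its dimension is `n - dim τ`. -/
theorem stmt16 (p n : ℕ) [Fact p.Prime]
    (f : MvPolynomial (Fin n) ℤ_[p]) (hf0 : f ≠ 0) (hfc : constantCoeff f = 0)
    (τ : Set (Fin n → ℝ)) (hτ : IsProperFace p f τ)
    (e : ℕ) (γ : Fin e → Set (Fin n → ℝ)) (hγinj : Function.Injective γ)
    (hγ : ∀ i, IsFacet p f (γ i) ∧ τ ⊆ γ i)
    (hγall : ∀ γ' : Set (Fin n → ℝ), IsFacet p f γ' → τ ⊆ γ' → ∃ i, γ' = γ i)
    (a : Fin e → (Fin n → ℕ))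
    (ha : ∀ i, a i ≠ 0 ∧ Primitive (a i) ∧ FML p f (natVec (a i)) = γ i)
    (Δτ : Set (Fin n → ℝ))
    (hΔτ : Δτ = {b : Fin n → ℝ | (∀ i, 0 ≤ b i) ∧ b ≠ 0 ∧ FML p f b = τ}) :
    Δτ = {x | ∃ lam : Fin e → ℝ, (∀ i, 0 < lam i) ∧ x = ∑ i, lam i • natVec (a i)}
    ∧ closure Δτ = {b : Fin n → ℝ | (∀ i, 0 ≤ b i) ∧ τ ⊆ FML p f b}
    ∧ closure Δτ
        = {x | ∃ lam : Fin e → ℝ, (∀ i, 0 ≤ lam i) ∧ x = ∑ i, lam i • natVec (a i)}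
    ∧ Module.finrank ℝ (Submodule.span ℝ Δτ)
        = n - Module.finrank ℝ (affineSpan ℝ τ).direction := by
  classical
  subst hΔτ
  obtain ⟨a0, ha0nn, ha0ne, hτeq⟩ := hτ
  subst hτeq
  obtain ⟨ω0, hω0, hω0m⟩ := exists_mm p hf0 a0
  have hann : ∀ i j, (0:ℝ) ≤ natVec (a i) j := fun i j => Nat.cast_nonneg _
  have haK : ∀ i, (∀ j, (0:ℝ) ≤ natVec (a i) j) ∧
      FML p f a0 ⊆ FML p f (natVec (a i)) := by
    intro i
    refine ⟨hann i, ?_⟩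
    rw [(ha i).2.2]
    exact (hγ i).2
  have haKi : ∀ i, (∀ j, (0:ℝ) ≤ natVec (a i) j) ∧
      (∀ j, a0 j = 0 → natVec (a i) j = 0) ∧
      ∀ ω ∈ f.support, dotL a0 (natVec ω) = mm p f a0 →
        dotL (natVec (a i)) (natVec ω) = mm p f (natVec (a i)) :=
    fun i => (mem_K_iff p hf0 ha0nn).mp (haK i)
  have hγdim : ∀ i, Module.finrank ℝ (vectorSpan ℝ (γ i)) = n - 1 := by
    intro i
    have := (hγ i).1.2
    rwa [direction_affineSpan] at this
  have hane : ∀ i, a i ≠ 0 := fun i => (ha i).1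
  have haF : ∀ i, FML p f (natVec (a i)) = γ i := fun i => (ha i).2.2
  have hKcone := K_subset_cone p hf0 ha0nn hγdim hγall hane haF
  have hconeK := cone_subset_K p hf0 ha0nn haK
  -- the closure statement
  have hΔsubK : {b : Fin n → ℝ | (∀ i, 0 ≤ b i) ∧ b ≠ 0 ∧ FML p f b = FML p f a0} ⊆
      {b : Fin n → ℝ | (∀ i, 0 ≤ b i) ∧ FML p f a0 ⊆ FML p f b} := by
    rintro b ⟨hbnn, hbne, hbF⟩
    exact ⟨hbnn, by rw [hbF]⟩
  have hclosure : closure {b : Fin n → ℝ | (∀ i, 0 ≤ b i) ∧ b ≠ 0 ∧ FML p f b = FML p f a0}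
      = {b : Fin n → ℝ | (∀ i, 0 ≤ b i) ∧ FML p f a0 ⊆ FML p f b} := by
    apply Set.Subset.antisymm
    · exact (K_closed p hf0 ha0nn).closure_subset_iff.mpr hΔsubK
    · intro b hb
      obtain ⟨hbnn, hbz, hbm⟩ := (mem_K_iff p hf0 ha0nn).mp hb
      have hmem : ∀ t : ℝ, 0 < t →
          b + t • a0 ∈ {b : Fin n → ℝ | (∀ i, 0 ≤ b i) ∧ b ≠ 0 ∧ FML p f b = FML p f a0} := by
        intro t ht
        have happ : ∀ j, (b + t • a0) j = b j + t * a0 j := fun j => rfl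
        have hnn : ∀ j, 0 ≤ (b + t • a0) j := fun j => by
          rw [happ]
          exact add_nonneg (hbnn j) (mul_nonneg ht.le (ha0nn j))
        have hval : ∀ ω' ∈ f.support, dotL a0 (natVec ω') = mm p f a0 →
            dotL (b + t • a0) (natVec ω') = mm p f b + t * mm p f a0 := by
          intro ω' hω' h
          rw [dotL_expand, hbm ω' hω' h, h]
        have hstrict : ∀ ω' ∈ f.support, dotL a0 (natVec ω') ≠ mm p f a0 →
            mm p f b + t * mm p f a0 < dotL (b + t • a0) (natVec ω') := by
          intro ω' hω' h
          rw [dotL_expand]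
          have h1 : mm p f b ≤ dotL b (natVec ω') := mm_le_mem p hf0 hω'
          have h2 : mm p f a0 < dotL a0 (natVec ω') :=
            lt_of_le_of_ne (mm_le_mem p hf0 hω') (Ne.symm h)
          have h3 := mul_lt_mul_of_pos_left h2 ht
          linarith
        have hmm' : mm p f (b + t • a0) = mm p f b + t * mm p f a0 := by
          rw [mm_eq_of_min p hf0 hω0 ?_, hval ω0 hω0 hω0m]
          intro ω' hω'
          by_cases h : dotL a0 (natVec ω') = mm p f a0
          · rw [hval ω' hω' h, hval ω0 hω0 hω0m]
          · rw [hval ω0 hω0 hω0m]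
            exact (hstrict ω' hω' h).le
        refine ⟨hnn, ?_, ?_⟩
        · obtain ⟨j, hj⟩ := Function.ne_iff.mp ha0ne
          intro h0
          have h1 : (b + t • a0) j = 0 := by rw [h0]; rfl
          rw [happ] at h1
          have h2 : 0 < t * a0 j := mul_pos ht (lt_of_le_of_ne (ha0nn j) (Ne.symm hj))
          have h3 := hbnn j
          linarith
        · apply FML_eq_of_pair p hf0 hnn ha0nn
          · intro ω hω
            constructor
            · intro h
              by_contra h'
              have := hstrict ω hω h'
              rw [h, hmm'] at this
              exact lt_irrefl _ this
            · intro h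
              rw [hval ω hω h, hmm']
          · intro j
            constructor
            · intro h1
              have h2 := happ j
              rw [h1] at h2
              have h3 : t * a0 j = 0 := by
                have := hbnn j
                have := mul_nonneg ht.le (ha0nn j)
                linarith
              rcases mul_eq_zero.mp h3 with h | h
              · exact absurd h ht.ne'
              · exact h
            · intro h
              rw [happ, hbz j h, h, mul_zero, add_zero]
      have htend : Filter.Tendsto (fun k : ℕ => b + (1/(k+1 : ℝ)) • a0)
          Filter.atTop (nhds b) := by
        have h1 : Filter.Tendsto (fun k : ℕ => (1/(k+1 : ℝ))) Filter.atTop (nhds 0) :=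
          tendsto_one_div_add_atTop_nhds_zero_nat
        have h2 := h1.smul_const a0
        rw [zero_smul] at h2
        have h3 := (tendsto_const_nhds (x := b) (f := (Filter.atTop : Filter ℕ))).add h2
        rwa [add_zero] at h3
      exact mem_closure_of_tendsto htend
        (Filter.Eventually.of_forall fun k => hmem _ (by positivity))
  refine ⟨?_, hclosure, hclosure.trans (Set.Subset.antisymm hKcone hconeK), ?_⟩
  · -- conclusion 1
    ext x
    constructor
    · rintro ⟨hxnn, hxne, hxF⟩
      have hsub1 : FML p f x ⊆ FML p f a0 := le_of_eq hxF
      have hsub2 : FML p f a0 ⊆ FML p f x := le_of_eq hxF.symm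
      have hx1 : ∀ ω ∈ f.support, (dotL x (natVec ω) = mm p f x ↔
          dotL a0 (natVec ω) = mm p f a0) := by
        intro ω hω
        exact ⟨fun h => EXT1 p hf0 hxnn ha0nn hsub1 ω hω h,
          fun h => EXT1 p hf0 ha0nn hxnn hsub2 ω hω h⟩
      have hx2 : ∀ j, (x j = 0 ↔ a0 j = 0) :=
        fun j => ⟨fun h => EXT2 p hf0 hxnn ha0nn hsub1 j h,
          fun h => EXT2 p hf0 ha0nn hxnn hsub2 j h⟩
      have hω0x : dotL x (natVec ω0) = mm p f x := (hx1 ω0 hω0).mpr hω0m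
      set c : Fin n → ℝ := ∑ i, (1:ℝ) • natVec (a i) with hc
      have hccst : ∀ ω ∈ f.support, dotL x (natVec ω) = mm p f x →
          dotL c (natVec ω) = dotL c (natVec ω0) := by
        intro ω hω h
        rw [hc, dotL_sum_left, dotL_sum_left]
        apply Finset.sum_congr rfl
        intro i _
        have h1 := (haKi i).2.2 ω hω ((hx1 ω hω).mp h)
        have h2 := (haKi i).2.2 ω0 hω0 hω0m
        rw [h1, h2]
      have hcz : ∀ j, x j = 0 → c j = 0 := by
        intro j hx0
        rw [hc, sum_smul_apply]
        apply Finset.sum_eq_zero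
        intro i _
        rw [(haKi i).2.1 j ((hx2 j).mp hx0), mul_zero]
      obtain ⟨ε, hε, hP⟩ := PERT p hf0 hxnn hω0 hω0x hccst hcz
      have hts : |(-(ε/2))| < ε := by rw [abs_neg, abs_of_pos (by positivity)]; linarith
      obtain ⟨hnn, hiff, hargm⟩ := hP (-(ε/2)) hts
      have hmemK : x + (-(ε/2)) • c ∈
          {b : Fin n → ℝ | (∀ i, 0 ≤ b i) ∧ FML p f a0 ⊆ FML p f b} := by
        refine (mem_K_iff p hf0 ha0nn).mpr ⟨?_, ?_, ?_⟩
        · intro j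
          exact hnn j
        · intro j hj
          exact (hiff j).mpr ((hx2 j).mpr hj)
        · intro ω hω hωm
          exact (hargm ω hω).mpr ((hx1 ω hω).mpr hωm)
      obtain ⟨mu, hmu, hmux⟩ := hKcone hmemK
      refine ⟨fun i => mu i + ε/2, fun i => by have := hmu i; linarith, ?_⟩
      calc x = (x + (-(ε/2)) • c) + (ε/2) • c := by module
        _ = (∑ i, mu i • natVec (a i)) + (ε/2) • ∑ i, (1:ℝ) • natVec (a i) := by
              rw [← hmux, hc]
        _ = ∑ i, (mu i + ε/2) • natVec (a i) := by
              rw [Finset.smul_sum, ← Finset.sum_add_distrib]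
              apply Finset.sum_congr rfl
              intro i _
              rw [smul_smul, mul_one, ← add_smul]
    · rintro ⟨lam, hlam, rfl⟩
      have ha0K : a0 ∈ {b : Fin n → ℝ | (∀ i, 0 ≤ b i) ∧ FML p f a0 ⊆ FML p f b} :=
        ⟨ha0nn, subset_rfl⟩
      obtain ⟨mu, hmu, hmua⟩ := hKcone ha0K
      have hxK := hconeK ⟨lam, fun i => (hlam i).le, rfl⟩
      obtain ⟨hxnn, hxz, hxm⟩ := (mem_K_iff p hf0 ha0nn).mp hxK
      have hsubK := hconeK ⟨lam, fun i => (hlam i).le, rfl⟩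
      have H2 : ∀ j, (∑ i, lam i • natVec (a i)) j = 0 → a0 j = 0 := by
        intro j hj
        rw [sum_smul_apply] at hj
        have hterm : ∀ i ∈ Finset.univ, lam i * natVec (a i) j = 0 := by
          rw [← Finset.sum_eq_zero_iff_of_nonneg
            (fun i _ => mul_nonneg (hlam i).le (hann i j))]
          exact hj
        have hw0 : ∀ i, natVec (a i) j = 0 := by
          intro i
          have := hterm i (Finset.mem_univ i)
          rcases mul_eq_zero.mp this with h | h
          · exact absurd h (hlam i).ne'
          · exact h
        have := congrFun hmua j
        rw [sum_smul_apply] at this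
        rw [this]
        apply Finset.sum_eq_zero
        intro i _
        rw [hw0 i, mul_zero]
      have H1 : ∀ ω ∈ f.support,
          dotL (∑ i, lam i • natVec (a i)) (natVec ω) = mm p f (∑ i, lam i • natVec (a i)) →
          dotL a0 (natVec ω) = mm p f a0 := by
        intro ω hω h
        have h0x := hxm ω0 hω0 hω0m
        have hwmin : ∀ i, dotL (natVec (a i)) (natVec ω0) = mm p f (natVec (a i)) :=
          fun i => (haKi i).2.2 ω0 hω0 hω0m
        have heq0 : dotL (∑ i, lam i • natVec (a i)) (natVec ω0)
            = ∑ i, lam i * mm p f (natVec (a i)) := by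
          rw [dotL_sum_left]
          exact Finset.sum_congr rfl fun i _ => by rw [hwmin i]
        have heqω : ∑ i, lam i * dotL (natVec (a i)) (natVec ω)
            = ∑ i, lam i * mm p f (natVec (a i)) := by
          rw [← dotL_sum_left, h, ← h0x, heq0]
        have hterm : ∀ i, dotL (natVec (a i)) (natVec ω) = mm p f (natVec (a i)) := by
          intro i
          have hnonneg : ∀ i ∈ Finset.univ, 0 ≤ lam i *
              (dotL (natVec (a i)) (natVec ω) - mm p f (natVec (a i))) := by
            intro i _
            apply mul_nonneg (hlam i).le
            have := mm_le_mem p hf0 (b := natVec (a i)) hω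
            linarith
          have hzero : ∑ i, lam i *
              (dotL (natVec (a i)) (natVec ω) - mm p f (natVec (a i))) = 0 := by
            simp only [mul_sub]
            rw [Finset.sum_sub_distrib, heqω, sub_self]
          have := (Finset.sum_eq_zero_iff_of_nonneg hnonneg).mp hzero i (Finset.mem_univ i)
          rcases mul_eq_zero.mp this with h | h
          · exact absurd h (hlam i).ne'
          · linarith
        have hd1 : dotL a0 (natVec ω) = ∑ i, mu i * mm p f (natVec (a i)) := by
          rw [hmua, dotL_sum_left]
          exact Finset.sum_congr rfl fun i _ => by rw [hterm i]
        have hd2 : dotL a0 (natVec ω0) = ∑ i, mu i * mm p f (natVec (a i)) := by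
          rw [hmua, dotL_sum_left]
          exact Finset.sum_congr rfl fun i _ => by rw [hwmin i]
        rw [hd1, ← hd2, hω0m]
      have heqF : FML p f (∑ i, lam i • natVec (a i)) = FML p f a0 :=
        Set.Subset.antisymm (MONO p hf0 hxnn ha0nn H1 H2) hxK.2
      refine ⟨hxnn, ?_, heqF⟩
      intro h0
      apply ha0ne
      funext j
      exact H2 j (by rw [h0]; rfl)
  · -- conclusion 4
    rw [direction_affineSpan]
    have hspan : Submodule.span ℝ {b : Fin n → ℝ | (∀ i, 0 ≤ b i) ∧ b ≠ 0 ∧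
        FML p f b = FML p f a0} = dualComp (vectorSpan ℝ (FML p f a0)) := by
      apply le_antisymm
      · rw [Submodule.span_le]
        rintro b ⟨hbnn, hbne, hbF⟩
        rw [SetLike.mem_coe]
        have hvs : vectorSpan ℝ (FML p f a0) =
            Submodule.span ℝ (FML p f a0 -ᵥ FML p f a0) := vectorSpan_def ℝ _
        rw [hvs]
        apply mem_dualComp_span
        intro d hd
        rw [Set.mem_vsub] at hd
        obtain ⟨y, hy, y', hy', rfl⟩ := hd
        rw [← hbF] at hy hy'
        rw [FML_eq p hf0 hbnn] at hy hy'
        rw [vsub_eq_sub, map_sub, hy.2, hy'.2, sub_self]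
      · intro cc hcc
        have hccst : ∀ ω ∈ f.support, dotL a0 (natVec ω) = mm p f a0 →
            dotL cc (natVec ω) = dotL cc (natVec ω0) := by
          intro ω hω h
          have h1 : natVec ω ∈ FML p f a0 := mem_FML_nat p hf0 ha0nn hω h
          have h2 : natVec ω0 ∈ FML p f a0 := mem_FML_nat p hf0 ha0nn hω0 hω0m
          have h3 := vsub_mem_vectorSpan ℝ h1 h2
          have h4 := hcc _ h3
          rw [vsub_eq_sub, map_sub] at h4
          linarith
        have hcz : ∀ j, a0 j = 0 → cc j = 0 := by
          intro j hj
          have h1 : natVec ω0 ∈ FML p f a0 := mem_FML_nat p hf0 ha0nn hω0 hω0m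
          have h2 : natVec ω0 + Pi.single j 1 ∈ FML p f a0 := by
            rw [FML_eq p hf0 ha0nn] at h1 ⊢
            refine ⟨NP_add p h1.1 (fun k => by
              by_cases hk : k = j <;> simp [Pi.single_apply, hk]), ?_⟩
            rw [map_add, dotL_single, hj, add_zero]
            exact h1.2
          have h3 := vsub_mem_vectorSpan ℝ h2 h1
          have h4 := hcc _ h3
          rw [vsub_eq_sub, add_sub_cancel_left, dotL_single] at h4
          exact h4
        obtain ⟨ε, hε, hP⟩ := PERT p hf0 ha0nn hω0 hω0m hccst hcz
        have hmemΔ : ∀ s : ℝ, |s| < ε → a0 + s • cc ∈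
            {b : Fin n → ℝ | (∀ i, 0 ≤ b i) ∧ b ≠ 0 ∧ FML p f b = FML p f a0} := by
          intro s hs
          obtain ⟨hnn, hiff, hargm⟩ := hP s hs
          refine ⟨fun j => hnn j, ?_, ?_⟩
          · intro h0
            apply ha0ne
            funext j
            have hj := congrFun h0 j
            exact (hiff j).mp (by simpa using hj)
          · exact FML_eq_of_pair p hf0 (fun j => hnn j) ha0nn
              (fun ω hω => hargm ω hω) (fun j => hiff j)
        have hs1 : |ε/2| < ε := by rw [abs_of_pos (by positivity)]; linarith
        have hs2 : |(-(ε/2))| < ε := by rw [abs_neg]; exact hs1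
        have h1 := hmemΔ (ε/2) hs1
        have h2 := hmemΔ (-(ε/2)) hs2
        have hrep : cc = ε⁻¹ • ((a0 + (ε/2) • cc) - (a0 + (-(ε/2)) • cc)) := by
          have hd : (a0 + (ε/2) • cc) - (a0 + (-(ε/2)) • cc) = ε • cc := by module
          rw [hd, smul_smul, inv_mul_cancel₀ hε.ne', one_smul]
        rw [hrep]
        exact Submodule.smul_mem _ _ (Submodule.sub_mem _
          (Submodule.subset_span h1) (Submodule.subset_span h2))
    rw [hspan, finrank_dualComp]



end IgusaTS
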